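/- Fix T ≥ 1, X ∈ ℝ^{n×T} with C_X = (1/T)XXᵀ positive definite, and W ∈ ℝ^{m×n} of full row rank m (with m ≤ n). Then the function S₂(M) = 2‖W‖_F² − ‖M‖_F² − 2 tr(M⁻¹ W C_X Wᵀ), defined on the convex set of symmetric positive definite m×m matrices, is strongly concave with parameter ν = 2: for all symmetric positive definite M₁, M₂ and all α ∈ [0,1], S₂(αM₁ + (1−α)M₂) ≥ αS₂(M₁) + (1−α)S₂(M₂) + (2/2)·α(1−α)·‖M₁ − M₂‖_F². -/

import Mathlib

open Matrix

/-- Squared Frobenius norm `‖A‖_F² = tr(AᵀA)`. -/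
noncomputable def frobSq {k l : ℕ} (A : Matrix (Fin k) (Fin l) ℝ) : ℝ := (Aᵀ * A).trace

private lemma trace_tmul_self_nonneg {k l : ℕ} (A : Matrix (Fin k) (Fin l) ℝ) :
    0 ≤ (Aᵀ * A).trace := by
  apply Finset.sum_nonneg
  intro j _
  simp only [Matrix.diag_apply, Matrix.mul_apply, Matrix.transpose_apply]
  exact Finset.sum_nonneg fun i _ => mul_self_nonneg _

open scoped MatrixOrder in
private lemma exists_sqrt_sym {k : ℕ} {M : Matrix (Fin k) (Fin k) ℝ} (hM : M.PosSemidef) :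
    ∃ S : Matrix (Fin k) (Fin k) ℝ, Sᵀ = S ∧ S * S = M := by
  refine ⟨CFC.sqrt M, ?_, CFC.sqrt_mul_sqrt_self M hM.nonneg⟩
  simpa [Matrix.conjTranspose_eq_transpose_of_trivial] using (CFC.sqrt_nonneg M).posSemidef.1.eq

private lemma trace_conj_nonneg {m k : ℕ} {M : Matrix (Fin m) (Fin m) ℝ} (hM : M.PosDef)
    (D : Matrix (Fin m) (Fin k) ℝ) : 0 ≤ (Dᵀ * (M * D)).trace := by
  obtain ⟨S, hST, hS⟩ := exists_sqrt_sym hM.posSemidef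
  have : Dᵀ * (M * D) = (S * D)ᵀ * (S * D) := by
    rw [Matrix.transpose_mul, hST, ← hS, Matrix.mul_assoc, Matrix.mul_assoc]
  rw [this]
  exact trace_tmul_self_nonneg _

private lemma key_ineq {m k : ℕ} {M : Matrix (Fin m) (Fin m) ℝ} (hM : M.PosDef)
    (N Y : Matrix (Fin m) (Fin k) ℝ) :
    2 * (Nᵀ * Y).trace - (Yᵀ * (M * Y)).trace ≤ (Nᵀ * (M⁻¹ * N)).trace := by
  have hdet : IsUnit M.det := (Matrix.isUnit_iff_isUnit_det M).mp hM.isUnit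
  have hMT : Mᵀ = M := by
    simpa [Matrix.conjTranspose_eq_transpose_of_trivial] using hM.1.eq
  have hMinvT : (M⁻¹)ᵀ = M⁻¹ := by rw [Matrix.transpose_nonsing_inv, hMT]
  set D : Matrix (Fin m) (Fin k) ℝ := M⁻¹ * N - Y with hD
  have expand : Dᵀ * (M * D) = Nᵀ * (M⁻¹ * N) - Nᵀ * Y - Yᵀ * N + Yᵀ * (M * Y) := by
    rw [hD, Matrix.transpose_sub, Matrix.transpose_mul, hMinvT, Matrix.mul_sub,
      Matrix.mul_nonsing_inv_cancel_left _ _ hdet, Matrix.sub_mul, Matrix.mul_sub,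
      Matrix.mul_sub, Matrix.mul_assoc Nᵀ M⁻¹ (M * Y), Matrix.nonsing_inv_mul_cancel_left _ _ hdet, Matrix.mul_assoc Nᵀ M⁻¹ N]
    abel
  have h0 : 0 ≤ (Dᵀ * (M * D)).trace := trace_conj_nonneg hM D
  rw [expand] at h0
  have hYN : (Yᵀ * N).trace = (Nᵀ * Y).trace := by
    rw [← Matrix.trace_transpose (Yᵀ * N), Matrix.transpose_mul, Matrix.transpose_transpose]
  rw [Matrix.trace_add, Matrix.trace_sub, Matrix.trace_sub, hYN] at h0
  linarith

private lemma posDef_combo {m : ℕ} {M₁ M₂ : Matrix (Fin m) (Fin m) ℝ}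
    (h1 : M₁.PosDef) (h2 : M₂.PosDef) {a b : ℝ} (ha : 0 < a) (hb : 0 < b) :
    (a • M₁ + b • M₂).PosDef := by
  refine Matrix.PosDef.of_dotProduct_mulVec_pos ?_ (fun x hx => ?_)
  · show (a • M₁ + b • M₂)ᴴ = _
    rw [conjTranspose_add, conjTranspose_smul, conjTranspose_smul, h1.1.eq, h2.1.eq]
    norm_num
  · have q1 := h1.dotProduct_mulVec_pos hx
    have q2 := h2.dotProduct_mulVec_pos hx
    simp only [Matrix.add_mulVec, Matrix.smul_mulVec, dotProduct_add, dotProduct_smul,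
      smul_eq_mul]
    have := mul_pos ha q1
    have := mul_pos hb q2
    linarith

private lemma trace_inv_convex {m k : ℕ} {M₁ M₂ : Matrix (Fin m) (Fin m) ℝ}
    (h1 : M₁.PosDef) (h2 : M₂.PosDef) {a b : ℝ} (ha : 0 < a) (hb : 0 < b) (hab : a + b = 1)
    (N : Matrix (Fin m) (Fin k) ℝ) :
    ((a • M₁ + b • M₂)⁻¹ * (N * Nᵀ)).trace ≤
      a * (M₁⁻¹ * (N * Nᵀ)).trace + b * (M₂⁻¹ * (N * Nᵀ)).trace := by
  set Mc := a • M₁ + b • M₂ with hMc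
  have hc : Mc.PosDef := posDef_combo h1 h2 ha hb
  have hcdet : IsUnit Mc.det := (Matrix.isUnit_iff_isUnit_det Mc).mp hc.isUnit
  set Y : Matrix (Fin m) (Fin k) ℝ := Mc⁻¹ * N with hY
  have cyc : ∀ (M : Matrix (Fin m) (Fin m) ℝ), (M⁻¹ * (N * Nᵀ)).trace = (Nᵀ * (M⁻¹ * N)).trace := by
    intro M
    rw [← Matrix.mul_assoc, Matrix.trace_mul_cycle, Matrix.mul_assoc]
  rw [cyc, cyc, cyc]
  have hMcY : Mc * Y = N := Matrix.mul_nonsing_inv_cancel_left _ _ hcdet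
  have hYN : (Yᵀ * N).trace = (Nᵀ * Y).trace := by
    rw [← Matrix.trace_transpose (Yᵀ * N), Matrix.transpose_mul, Matrix.transpose_transpose]
  have hsplit : (Yᵀ * (Mc * Y)).trace
      = a * (Yᵀ * (M₁ * Y)).trace + b * (Yᵀ * (M₂ * Y)).trace := by
    rw [hMc, Matrix.add_mul, Matrix.smul_mul, Matrix.smul_mul, Matrix.mul_add,
      Matrix.mul_smul, Matrix.mul_smul, Matrix.trace_add, Matrix.trace_smul, Matrix.trace_smul]
    simp [smul_eq_mul]
  have e1 : (Nᵀ * (Mc⁻¹ * N)).trace = 2 * (Nᵀ * Y).trace - (Yᵀ * (Mc * Y)).trace := by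
    rw [← hY, hMcY, hYN]; ring
  have k1 := key_ineq h1 N Y
  have k2 := key_ineq h2 N Y
  have b1 := mul_le_mul_of_nonneg_left k1 ha.le
  have b2 := mul_le_mul_of_nonneg_left k2 hb.le
  rw [e1, hsplit]
  obtain rfl : b = 1 - a := by linarith
  nlinarith [b1, b2]

private lemma frob_identity {m : ℕ} (M₁ M₂ : Matrix (Fin m) (Fin m) ℝ) (α : ℝ) :
    frobSq (α • M₁ + (1 - α) • M₂)
      = α * frobSq M₁ + (1 - α) * frobSq M₂ - α * (1 - α) * frobSq (M₁ - M₂) := by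
  have hsym : (M₂ᵀ * M₁).trace = (M₁ᵀ * M₂).trace := by
    rw [← Matrix.trace_transpose (M₂ᵀ * M₁), Matrix.transpose_mul, Matrix.transpose_transpose]
  unfold frobSq
  simp only [Matrix.transpose_add, Matrix.transpose_sub, Matrix.transpose_smul,
    Matrix.add_mul, Matrix.mul_add, Matrix.sub_mul, Matrix.mul_sub,
    Matrix.smul_mul, Matrix.mul_smul, Matrix.trace_add, Matrix.trace_sub,
    Matrix.trace_smul, smul_eq_mul, smul_smul]
  rw [hsym]
  ring

/-- strong concavity (with parameter 2) of the second-level cost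
`S₂(M) = 2‖W‖_F² − ‖M‖_F² − 2 tr(M⁻¹ W C_X Wᵀ)` on positive definite matrices. -/
theorem S2_strongly_concave
    {n T m : ℕ} (hT : 1 ≤ T) (hmn : m ≤ n)
    (X : Matrix (Fin n) (Fin T) ℝ)
    (C : Matrix (Fin n) (Fin n) ℝ) (hC : C = (T : ℝ)⁻¹ • (X * Xᵀ)) (hCpd : C.PosDef)
    (W : Matrix (Fin m) (Fin n) ℝ) (hW : W.rank = m)
    (S₂ : Matrix (Fin m) (Fin m) ℝ → ℝ)
    (hS₂ : ∀ M, S₂ M = 2 * frobSq W - frobSq M - 2 * (M⁻¹ * (W * C * Wᵀ)).trace) :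
    ∀ M₁ M₂ : Matrix (Fin m) (Fin m) ℝ, M₁.PosDef → M₂.PosDef →
      ∀ α : ℝ, α ∈ Set.Icc (0 : ℝ) 1 →
        α * S₂ M₁ + (1 - α) * S₂ M₂ + (2 / 2) * α * (1 - α) * frobSq (M₁ - M₂) ≤
          S₂ (α • M₁ + (1 - α) • M₂) := by
  intro M₁ M₂ h1 h2 α hα
  obtain ⟨hα0, hα1⟩ := hα
  rcases eq_or_lt_of_le hα0 with h0 | h0
  · rw [← h0]; norm_num
  rcases eq_or_lt_of_le hα1 with h1' | h1'
  · rw [h1']; norm_num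
  · have hb : (0:ℝ) < 1 - α := by linarith
    obtain ⟨S, hST, hS⟩ := exists_sqrt_sym hCpd.posSemidef
    set N := W * S with hN
    have hA : W * C * Wᵀ = N * Nᵀ := by
      rw [hN, Matrix.transpose_mul, hST, ← hS]
      simp [Matrix.mul_assoc]
    have tc := trace_inv_convex h1 h2 h0 hb (by ring) N
    rw [← hA] at tc
    have hq := frob_identity M₁ M₂ α
    rw [hS₂, hS₂, hS₂, hq]
    nlinarith [tc]
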